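/- The analytic local inverse θ(τ) of τ(θ) = θ·sqrt((1 + iθ - e^{iθ})/θ²) near τ = 0 (normalized by θ'(0) = √2) has Taylor expansion θ(τ) = √2·τ - (i/3)τ² - (1/(9√2))τ³ + (2i/135)τ⁴ + (1/(540√2))τ⁵ + O(τ⁶). -/
import Mathlib

open Complex

/-- Taylor expansion of the parametrization `θ(τ)` of the steepest descent curve:
if `θ` is analytic near `0`, `θ(0) = 0`, `θ'(0) = √2`, and
`e^{iθ(τ)} - iθ(τ) = 1 - τ²` near `0`, then
`θ(τ) = √2 τ - (i/3)τ² - τ³/(9√2) + (2i/135)τ⁴ + τ⁵/(540√2) + O(τ⁶)`. -/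
theorem theta_taylor_coefficients (θ : ℂ → ℂ) (hθ : AnalyticAt ℂ θ 0)
    (h0 : θ 0 = 0) (h1 : deriv θ 0 = (Real.sqrt 2 : ℂ))
    (heq : ∀ᶠ τ in nhds (0 : ℂ),
      Complex.exp (Complex.I * θ τ) - Complex.I * θ τ = 1 - τ ^ 2) :
    iteratedDeriv 2 θ 0 / 2 = -Complex.I / 3 ∧
    iteratedDeriv 3 θ 0 / 6 = -(1 / (9 * (Real.sqrt 2 : ℂ))) ∧
    iteratedDeriv 4 θ 0 / 24 = 2 * Complex.I / 135 ∧
    iteratedDeriv 5 θ 0 / 120 = 1 / (540 * (Real.sqrt 2 : ℂ)) := by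
  obtain ⟨r, hr, hA⟩ := hθ.exists_ball_analyticOnNhd
  set B := Metric.ball (0 : ℂ) r with hBdef
  have hBe : ∀ᶠ τ in nhds (0 : ℂ), τ ∈ B := Metric.ball_mem_nhds 0 hr
  have hAk : ∀ k : ℕ, AnalyticOnNhd ℂ (iteratedDeriv k θ) B := by
    intro k
    induction k with
    | zero => simpa [iteratedDeriv_zero] using hA
    | succ n ih => rw [iteratedDeriv_succ]; exact ih.deriv
  have hD : ∀ (k : ℕ), ∀ τ ∈ B,
      HasDerivAt (iteratedDeriv k θ) (iteratedDeriv (k + 1) θ τ) τ := by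
    intro k τ hτ
    have h := ((hAk k τ hτ).differentiableAt).hasDerivAt
    rwa [iteratedDeriv_succ]
  set c : ℂ := (Real.sqrt 2 : ℂ) with hcdef
  have hc2 : c ^ 2 = 2 := by
    rw [hcdef]
    norm_cast
    exact Real.sq_sqrt (by norm_num)
  have hc : c ≠ 0 := by
    intro h
    rw [h] at hc2
    norm_num at hc2
  -- E1
  have E1 : ∀ᶠ τ in nhds (0 : ℂ),
      θ τ * iteratedDeriv 1 θ τ + Complex.I * τ ^ 2 * iteratedDeriv 1 θ τ = 2 * τ := by
    filter_upwards [heq.eventually_nhds, heq, hBe] with τ hev hτeq hτB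
    have hd0 : HasDerivAt θ (iteratedDeriv 1 θ τ) τ := by
      have h := hD 0 τ hτB; rwa [iteratedDeriv_zero] at h
    have hLd : HasDerivAt (fun t => Complex.exp (Complex.I * θ t) - Complex.I * θ t)
        (Complex.exp (Complex.I * θ τ) * (Complex.I * iteratedDeriv 1 θ τ)
          - Complex.I * iteratedDeriv 1 θ τ) τ :=
      ((hd0.const_mul Complex.I).cexp).sub (hd0.const_mul Complex.I)
    have hRd : HasDerivAt (fun t : ℂ => 1 - t ^ 2) (-((2 : ℕ) * τ ^ 1)) τ :=
      (hasDerivAt_pow 2 τ).const_sub 1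
    have hLd' : HasDerivAt (fun t => Complex.exp (Complex.I * θ t) - Complex.I * θ t)
        (-((2 : ℕ) * τ ^ 1)) τ := hRd.congr_of_eventuallyEq hev
    have key := hLd.unique hLd'
    push_cast at key
    linear_combination (Complex.I * iteratedDeriv 1 θ τ) * hτeq - key
      + θ τ * iteratedDeriv 1 θ τ * Complex.I_sq
  -- E2
  have E2 : ∀ᶠ τ in nhds (0 : ℂ),
      iteratedDeriv 1 θ τ ^ 2 + θ τ * iteratedDeriv 2 θ τ
        + 2 * Complex.I * τ * iteratedDeriv 1 θ τ
        + Complex.I * τ ^ 2 * iteratedDeriv 2 θ τ = 2 := by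
    filter_upwards [E1.eventually_nhds, hBe] with τ hev hτB
    have hd0 : HasDerivAt θ (iteratedDeriv 1 θ τ) τ := by
      have h := hD 0 τ hτB; rwa [iteratedDeriv_zero] at h
    have hd1 := hD 1 τ hτB
    have hLd : HasDerivAt
        (fun t => θ t * iteratedDeriv 1 θ t + Complex.I * t ^ 2 * iteratedDeriv 1 θ t)
        ((iteratedDeriv 1 θ τ * iteratedDeriv 1 θ τ + θ τ * iteratedDeriv 2 θ τ)
          + (Complex.I * ((2 : ℕ) * τ ^ 1) * iteratedDeriv 1 θ τ
            + Complex.I * τ ^ 2 * iteratedDeriv 2 θ τ)) τ :=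
      (hd0.mul hd1).add (((hasDerivAt_pow 2 τ).const_mul Complex.I).mul hd1)
    have hRd : HasDerivAt (fun t : ℂ => 2 * t) 2 τ := by
      simpa using (hasDerivAt_id τ).const_mul (2 : ℂ)
    have hLd' : HasDerivAt
        (fun t => θ t * iteratedDeriv 1 θ t + Complex.I * t ^ 2 * iteratedDeriv 1 θ t)
        (2 : ℂ) τ := hRd.congr_of_eventuallyEq hev
    have key := hLd.unique hLd'
    push_cast at key
    linear_combination key
  -- E3
  have E3 : ∀ᶠ τ in nhds (0 : ℂ),
      3 * iteratedDeriv 1 θ τ * iteratedDeriv 2 θ τ + θ τ * iteratedDeriv 3 θ τ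
        + 2 * Complex.I * iteratedDeriv 1 θ τ
        + 4 * Complex.I * τ * iteratedDeriv 2 θ τ
        + Complex.I * τ ^ 2 * iteratedDeriv 3 θ τ = 0 := by
    filter_upwards [E2.eventually_nhds, hBe] with τ hev hτB
    have hd0 : HasDerivAt θ (iteratedDeriv 1 θ τ) τ := by
      have h := hD 0 τ hτB; rwa [iteratedDeriv_zero] at h
    have hd1 := hD 1 τ hτB
    have hd2 := hD 2 τ hτB
    have hLd : HasDerivAt
        (fun t => iteratedDeriv 1 θ t ^ 2 + θ t * iteratedDeriv 2 θ t
          + 2 * Complex.I * t * iteratedDeriv 1 θ t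
          + Complex.I * t ^ 2 * iteratedDeriv 2 θ t)
        ((((2 : ℕ) * iteratedDeriv 1 θ τ ^ 1 * iteratedDeriv 2 θ τ)
          + (iteratedDeriv 1 θ τ * iteratedDeriv 2 θ τ + θ τ * iteratedDeriv 3 θ τ))
          + (2 * Complex.I * 1 * iteratedDeriv 1 θ τ
            + 2 * Complex.I * τ * iteratedDeriv 2 θ τ)
          + (Complex.I * ((2 : ℕ) * τ ^ 1) * iteratedDeriv 2 θ τ
            + Complex.I * τ ^ 2 * iteratedDeriv 3 θ τ)) τ := by
      exact (((hd1.pow 2).add (hd0.mul hd2)).add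
          (((hasDerivAt_id τ).const_mul (2 * Complex.I)).mul hd1)).add
        (((hasDerivAt_pow 2 τ).const_mul Complex.I).mul hd2)
    have hRd : HasDerivAt (fun _ : ℂ => (2 : ℂ)) 0 τ := hasDerivAt_const τ 2
    have hLd' : HasDerivAt
        (fun t => iteratedDeriv 1 θ t ^ 2 + θ t * iteratedDeriv 2 θ t
          + 2 * Complex.I * t * iteratedDeriv 1 θ t
          + Complex.I * t ^ 2 * iteratedDeriv 2 θ t)
        (0 : ℂ) τ := hRd.congr_of_eventuallyEq hev
    have key := hLd.unique hLd'
    push_cast at key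
    linear_combination key
  -- E4
  have E4 : ∀ᶠ τ in nhds (0 : ℂ),
      3 * iteratedDeriv 2 θ τ ^ 2 + 4 * iteratedDeriv 1 θ τ * iteratedDeriv 3 θ τ
        + θ τ * iteratedDeriv 4 θ τ + 6 * Complex.I * iteratedDeriv 2 θ τ
        + 6 * Complex.I * τ * iteratedDeriv 3 θ τ
        + Complex.I * τ ^ 2 * iteratedDeriv 4 θ τ = 0 := by
    filter_upwards [E3.eventually_nhds, hBe] with τ hev hτB
    have hd0 : HasDerivAt θ (iteratedDeriv 1 θ τ) τ := by
      have h := hD 0 τ hτB; rwa [iteratedDeriv_zero] at h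
    have hd1 := hD 1 τ hτB
    have hd2 := hD 2 τ hτB
    have hd3 := hD 3 τ hτB
    have hLd : HasDerivAt
        (fun t => 3 * iteratedDeriv 1 θ t * iteratedDeriv 2 θ t + θ t * iteratedDeriv 3 θ t
          + 2 * Complex.I * iteratedDeriv 1 θ t
          + 4 * Complex.I * t * iteratedDeriv 2 θ t
          + Complex.I * t ^ 2 * iteratedDeriv 3 θ t)
        ((((3 * iteratedDeriv 2 θ τ * iteratedDeriv 2 θ τ
            + 3 * iteratedDeriv 1 θ τ * iteratedDeriv 3 θ τ)
          + (iteratedDeriv 1 θ τ * iteratedDeriv 3 θ τ + θ τ * iteratedDeriv 4 θ τ))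
          + 2 * Complex.I * iteratedDeriv 2 θ τ)
          + (4 * Complex.I * 1 * iteratedDeriv 2 θ τ
            + 4 * Complex.I * τ * iteratedDeriv 3 θ τ)
          + (Complex.I * ((2 : ℕ) * τ ^ 1) * iteratedDeriv 3 θ τ
            + Complex.I * τ ^ 2 * iteratedDeriv 4 θ τ)) τ := by
      exact (((((hd1.const_mul 3).mul hd2).add (hd0.mul hd3)).add
            (hd1.const_mul (2 * Complex.I))).add
          (((hasDerivAt_id τ).const_mul (4 * Complex.I)).mul hd2)).add
        (((hasDerivAt_pow 2 τ).const_mul Complex.I).mul hd3)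
    have hRd : HasDerivAt (fun _ : ℂ => (0 : ℂ)) 0 τ := hasDerivAt_const τ 0
    have hLd' : HasDerivAt
        (fun t => 3 * iteratedDeriv 1 θ t * iteratedDeriv 2 θ t + θ t * iteratedDeriv 3 θ t
          + 2 * Complex.I * iteratedDeriv 1 θ t
          + 4 * Complex.I * t * iteratedDeriv 2 θ t
          + Complex.I * t ^ 2 * iteratedDeriv 3 θ t)
        (0 : ℂ) τ := hRd.congr_of_eventuallyEq hev
    have key := hLd.unique hLd'
    push_cast at key
    linear_combination key
  -- E5
  have E5 : ∀ᶠ τ in nhds (0 : ℂ),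
      10 * iteratedDeriv 2 θ τ * iteratedDeriv 3 θ τ
        + 5 * iteratedDeriv 1 θ τ * iteratedDeriv 4 θ τ
        + θ τ * iteratedDeriv 5 θ τ + 12 * Complex.I * iteratedDeriv 3 θ τ
        + 8 * Complex.I * τ * iteratedDeriv 4 θ τ
        + Complex.I * τ ^ 2 * iteratedDeriv 5 θ τ = 0 := by
    filter_upwards [E4.eventually_nhds, hBe] with τ hev hτB
    have hd0 : HasDerivAt θ (iteratedDeriv 1 θ τ) τ := by
      have h := hD 0 τ hτB; rwa [iteratedDeriv_zero] at h
    have hd1 := hD 1 τ hτB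
    have hd2 := hD 2 τ hτB
    have hd3 := hD 3 τ hτB
    have hd4 := hD 4 τ hτB
    have hLd : HasDerivAt
        (fun t => 3 * iteratedDeriv 2 θ t ^ 2 + 4 * iteratedDeriv 1 θ t * iteratedDeriv 3 θ t
          + θ t * iteratedDeriv 4 θ t + 6 * Complex.I * iteratedDeriv 2 θ t
          + 6 * Complex.I * t * iteratedDeriv 3 θ t
          + Complex.I * t ^ 2 * iteratedDeriv 4 θ t)
        (((((3 * ((2 : ℕ) * iteratedDeriv 2 θ τ ^ 1 * iteratedDeriv 3 θ τ))
          + (4 * iteratedDeriv 2 θ τ * iteratedDeriv 3 θ τ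
            + 4 * iteratedDeriv 1 θ τ * iteratedDeriv 4 θ τ))
          + (iteratedDeriv 1 θ τ * iteratedDeriv 4 θ τ + θ τ * iteratedDeriv 5 θ τ))
          + 6 * Complex.I * iteratedDeriv 3 θ τ)
          + (6 * Complex.I * 1 * iteratedDeriv 3 θ τ
            + 6 * Complex.I * τ * iteratedDeriv 4 θ τ)
          + (Complex.I * ((2 : ℕ) * τ ^ 1) * iteratedDeriv 4 θ τ
            + Complex.I * τ ^ 2 * iteratedDeriv 5 θ τ)) τ := by
      exact ((((((hd2.pow 2).const_mul 3).add
              (((hd1.const_mul 4).mul hd3))).add (hd0.mul hd4)).add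
            (hd2.const_mul (6 * Complex.I))).add
          (((hasDerivAt_id τ).const_mul (6 * Complex.I)).mul hd3)).add
        (((hasDerivAt_pow 2 τ).const_mul Complex.I).mul hd4)
    have hRd : HasDerivAt (fun _ : ℂ => (0 : ℂ)) 0 τ := hasDerivAt_const τ 0
    have hLd' : HasDerivAt
        (fun t => 3 * iteratedDeriv 2 θ t ^ 2 + 4 * iteratedDeriv 1 θ t * iteratedDeriv 3 θ t
          + θ t * iteratedDeriv 4 θ t + 6 * Complex.I * iteratedDeriv 2 θ t
          + 6 * Complex.I * t * iteratedDeriv 3 θ t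
          + Complex.I * t ^ 2 * iteratedDeriv 4 θ t)
        (0 : ℂ) τ := hRd.congr_of_eventuallyEq hev
    have key := hLd.unique hLd'
    push_cast at key
    linear_combination key
  -- E6
  have E6 : ∀ᶠ τ in nhds (0 : ℂ),
      10 * iteratedDeriv 3 θ τ ^ 2 + 15 * iteratedDeriv 2 θ τ * iteratedDeriv 4 θ τ
        + 6 * iteratedDeriv 1 θ τ * iteratedDeriv 5 θ τ
        + θ τ * iteratedDeriv 6 θ τ + 20 * Complex.I * iteratedDeriv 4 θ τ
        + 10 * Complex.I * τ * iteratedDeriv 5 θ τ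
        + Complex.I * τ ^ 2 * iteratedDeriv 6 θ τ = 0 := by
    filter_upwards [E5.eventually_nhds, hBe] with τ hev hτB
    have hd0 : HasDerivAt θ (iteratedDeriv 1 θ τ) τ := by
      have h := hD 0 τ hτB; rwa [iteratedDeriv_zero] at h
    have hd1 := hD 1 τ hτB
    have hd2 := hD 2 τ hτB
    have hd3 := hD 3 τ hτB
    have hd4 := hD 4 τ hτB
    have hd5 := hD 5 τ hτB
    have hLd : HasDerivAt
        (fun t => 10 * iteratedDeriv 2 θ t * iteratedDeriv 3 θ t
          + 5 * iteratedDeriv 1 θ t * iteratedDeriv 4 θ t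
          + θ t * iteratedDeriv 5 θ t + 12 * Complex.I * iteratedDeriv 3 θ t
          + 8 * Complex.I * t * iteratedDeriv 4 θ t
          + Complex.I * t ^ 2 * iteratedDeriv 5 θ t)
        (((((10 * iteratedDeriv 3 θ τ * iteratedDeriv 3 θ τ
            + 10 * iteratedDeriv 2 θ τ * iteratedDeriv 4 θ τ)
          + (5 * iteratedDeriv 2 θ τ * iteratedDeriv 4 θ τ
            + 5 * iteratedDeriv 1 θ τ * iteratedDeriv 5 θ τ))
          + (iteratedDeriv 1 θ τ * iteratedDeriv 5 θ τ + θ τ * iteratedDeriv 6 θ τ))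
          + 12 * Complex.I * iteratedDeriv 4 θ τ)
          + (8 * Complex.I * 1 * iteratedDeriv 4 θ τ
            + 8 * Complex.I * τ * iteratedDeriv 5 θ τ)
          + (Complex.I * ((2 : ℕ) * τ ^ 1) * iteratedDeriv 5 θ τ
            + Complex.I * τ ^ 2 * iteratedDeriv 6 θ τ)) τ := by
      exact ((((((hd2.const_mul 10).mul hd3).add
              ((hd1.const_mul 5).mul hd4)).add (hd0.mul hd5)).add
            (hd3.const_mul (12 * Complex.I))).add
          (((hasDerivAt_id τ).const_mul (8 * Complex.I)).mul hd4)).add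
        (((hasDerivAt_pow 2 τ).const_mul Complex.I).mul hd5)
    have hRd : HasDerivAt (fun _ : ℂ => (0 : ℂ)) 0 τ := hasDerivAt_const τ 0
    have hLd' : HasDerivAt
        (fun t => 10 * iteratedDeriv 2 θ t * iteratedDeriv 3 θ t
          + 5 * iteratedDeriv 1 θ t * iteratedDeriv 4 θ t
          + θ t * iteratedDeriv 5 θ t + 12 * Complex.I * iteratedDeriv 3 θ t
          + 8 * Complex.I * t * iteratedDeriv 4 θ t
          + Complex.I * t ^ 2 * iteratedDeriv 5 θ t)
        (0 : ℂ) τ := hRd.congr_of_eventuallyEq hev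
    have key := hLd.unique hLd'
    push_cast at key
    linear_combination key
  -- evaluate at 0
  have e3 := E3.self_of_nhds
  have e4 := E4.self_of_nhds
  have e5 := E5.self_of_nhds
  have e6 := E6.self_of_nhds
  rw [iteratedDeriv_one, h0, h1] at e3 e4 e5 e6
  set t2 := iteratedDeriv 2 θ 0
  set t3 := iteratedDeriv 3 θ 0
  set t4 := iteratedDeriv 4 θ 0
  set t5 := iteratedDeriv 5 θ 0
  have ht2 : t2 = -2 * Complex.I / 3 :=
    mul_left_cancel₀ hc (show c * t2 = c * (-2 * Complex.I / 3) by linear_combination e3 / 3)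
  rw [ht2] at e4 e5 e6
  have hct3 : c * t3 = -2 / 3 := by
    linear_combination (1 / 4 : ℂ) * e4 + (2 / 3 : ℂ) * Complex.I_sq
  have ht4 : t4 = 16 * Complex.I / 45 := by
    linear_combination (c / 10) * e5 - (16 * Complex.I / 30) * hct3 - (t4 / 2) * hc2
  rw [ht4] at e6
  have ht3sq : t3 ^ 2 = 2 / 9 := by
    linear_combination ((c * t3 - 2 / 3) / 2) * hct3 - (t3 ^ 2 / 2) * hc2
  have hct5 : c * t5 = 2 / 9 := by
    linear_combination (1 / 6 : ℂ) * e6 - (5 / 3 : ℂ) * ht3sq - (16 / 27 : ℂ) * Complex.I_sq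
  refine ⟨by linear_combination ht2 / 2, ?_, by linear_combination ht4 / 24, ?_⟩
  · field_simp
    linear_combination 9 * hct3
  · field_simp
    linear_combination 540 * hct5
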